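/- For a vector η in a Hilbert C*-module H, the following are equivalent: (1) θ_{η,η} is a projection (i.e., idempotent and self-adjoint); (2) ⟨η,η⟩ is a projection in A; (3) η = η⟨η,η⟩. -/

import Mathlib

open scoped RightActions

/-- The December 2024 Mathlib `CStarModule` (right `A`-module, `⟪x, y <• a⟫ = ⟪x, y⟫ * a`). -/
class CStarModuleOld (A E : Type*) [NonUnitalSemiring A] [StarRing A] [Module ℂ A]
    [AddCommGroup E] [Module ℂ E] [PartialOrder A] [SMul Aᵐᵒᵖ E] [Norm A] [Norm E]
    extends Inner A E where
  inner_add_right {x} {y} {z} : inner x (y + z) = inner x y + inner x z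
  inner_self_nonneg {x} : 0 ≤ inner x x
  inner_self {x} : inner x x = 0 ↔ x = 0
  inner_op_smul_right {a : A} {x y : E} : inner x (y <• a) = inner x y * a
  inner_smul_right_complex {z : ℂ} {x} {y} : inner x (z • y) = z • inner x y
  star_inner x y : star (inner x y) = inner y x
  norm_eq_sqrt_norm_inner_self x : ‖x‖ = √‖inner x x‖

variable {A E : Type*} [NonUnitalCStarAlgebra A] [PartialOrder A] [StarOrderedRing A]
  [AddCommGroup E] [Module ℂ E] [SMul Aᵐᵒᵖ E] [Norm E] [CStarModuleOld A E]

/-- The rank-one operator `θ_{ξ,η} : ζ ↦ ξ⟨η,ζ⟩` on a Hilbert C*-module. -/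
def rankOne (ξ η : E) : E → E := fun ζ => ξ <• (inner (𝕜 := A) η ζ)

namespace CStarModuleOld

lemma inner_sub_right {x y z : E} :
    inner (𝕜 := A) x (y - z) = inner (𝕜 := A) x y - inner (𝕜 := A) x z := by
  have := CStarModuleOld.inner_add_right (A := A) (x := x) (y := y - z) (z := z)
  rw [sub_add_cancel] at this
  rw [this, add_sub_cancel_right]

lemma inner_sub_left {x y z : E} :
    inner (𝕜 := A) (x - y) z = inner (𝕜 := A) x z - inner (𝕜 := A) y z := by
  rw [← CStarModuleOld.star_inner (A := A) z (x - y), inner_sub_right, star_sub,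
    CStarModuleOld.star_inner, CStarModuleOld.star_inner]

lemma inner_op_smul_left {a : A} {x y : E} :
    inner (𝕜 := A) (x <• a) y = star a * inner (𝕜 := A) x y := by
  rw [← CStarModuleOld.star_inner (A := A) y (x <• a), CStarModuleOld.inner_op_smul_right,
    star_mul, CStarModuleOld.star_inner]

end CStarModuleOld

/-- A self-adjoint element with zero square is zero. -/
lemma sa_sq_zero {b : A} (hb : IsSelfAdjoint b) (h : b * b = 0) : b = 0 := by
  have : ‖b‖ * ‖b‖ = 0 := by
    rw [← CStarRing.norm_star_mul_self, hb.star_eq, h, norm_zero]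
  simpa using mul_self_eq_zero.mp this

/-- The following are equivalent: (1) `θ_{η,η}` is a projection (idempotent and self-adjoint);
(2) `⟨η,η⟩` is a projection in `A`; (3) `η = η⟨η,η⟩`. -/
theorem rankOne_isProjection_iff (η : E) :
    (((rankOne (A := A) η η) ∘ (rankOne (A := A) η η) = rankOne (A := A) η η ∧
        ∀ x y : E, inner (𝕜 := A) (rankOne (A := A) η η x) y
          = inner (𝕜 := A) x (rankOne (A := A) η η y))
      ↔ (IsIdempotentElem (inner (𝕜 := A) η η) ∧ IsSelfAdjoint (inner (𝕜 := A) η η)))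
    ∧ ((IsIdempotentElem (inner (𝕜 := A) η η) ∧ IsSelfAdjoint (inner (𝕜 := A) η η))
      ↔ η = η <• (inner (𝕜 := A) η η)) := by
  set h : A := inner (𝕜 := A) η η with hh
  have hsa : IsSelfAdjoint h := IsSelfAdjoint.of_nonneg CStarModuleOld.inner_self_nonneg
  -- (2) → (3)
  have two_three : IsIdempotentElem h → η = η <• h := by
    intro hid
    have h2 : ∀ x : A, h * (h * x) = h * x := fun x => by rw [← mul_assoc, hid.eq]
    have key : inner (𝕜 := A) (η - η <• h) (η - η <• h) = 0 := by
      simp only [CStarModuleOld.inner_sub_left, CStarModuleOld.inner_sub_right,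
        CStarModuleOld.inner_op_smul_left, CStarModuleOld.inner_op_smul_right, hsa.star_eq, ← hh]
      simp only [mul_assoc, hid.eq, h2, mul_sub]
      abel_nf
      simp
    exact sub_eq_zero.mp (CStarModuleOld.inner_self.mp key)
  -- (3) → (2)
  have three_two : η = η <• h → IsIdempotentElem h := by
    intro heq
    have : h = h * h := by
      calc h = inner (𝕜 := A) η (η <• h) := by rw [← heq]
        _ = h * h := by rw [CStarModuleOld.inner_op_smul_right]
    exact this.symm
  -- self-adjointness of rankOne is automatic
  have adj : ∀ x y : E, inner (𝕜 := A) (rankOne (A := A) η η x) y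
      = inner (𝕜 := A) x (rankOne (A := A) η η y) := by
    intro x y
    simp only [rankOne, CStarModuleOld.inner_op_smul_left, CStarModuleOld.inner_op_smul_right,
      CStarModuleOld.star_inner]
  constructor
  · constructor
    · rintro ⟨hidem, -⟩
      refine ⟨?_, hsa⟩
      have key := congrFun hidem η
      simp only [Function.comp, rankOne, CStarModuleOld.inner_op_smul_right, ← hh] at key
      -- key : η <• (h * h) = η <• h
      have h3 : h * (h * h) = h * h := by
        have := congrArg (inner (𝕜 := A) η) key
        simpa only [CStarModuleOld.inner_op_smul_right, ← hh, mul_assoc] using this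
      -- (h*h - h) is self-adjoint with square zero
      have hb : IsSelfAdjoint (h * h - h) := by
        rw [IsSelfAdjoint, star_sub, star_mul, hsa.star_eq]
      have hsq : (h * h - h) * (h * h - h) = 0 := by
        have h4 : h * h * (h * h) = h * h := by
          rw [mul_assoc, h3, h3]
        calc (h * h - h) * (h * h - h)
            = h * h * (h * h) - h * (h * h) - (h * h * h - h * h) := by noncomm_ring
          _ = 0 := by rw [h4, h3, mul_assoc, h3]; noncomm_ring
      exact sub_eq_zero.mp (sa_sq_zero hb hsq)
    · rintro ⟨hid, -⟩
      refine ⟨?_, adj⟩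
      have h2 : ∀ x : A, h * (h * x) = h * x := fun x => by rw [← mul_assoc, hid.eq]
      funext ζ
      simp only [Function.comp, rankOne, CStarModuleOld.inner_op_smul_right, ← hh]
      set b : A := inner (𝕜 := A) η ζ with hb
      have key : inner (𝕜 := A) (η <• (h * b) - η <• b) (η <• (h * b) - η <• b) = 0 := by
        simp only [CStarModuleOld.inner_sub_left, CStarModuleOld.inner_sub_right,
          CStarModuleOld.inner_op_smul_left, CStarModuleOld.inner_op_smul_right, star_mul,
          hsa.star_eq, ← hh]
        simp only [mul_assoc, hid.eq, h2, mul_sub, sub_mul]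
        abel_nf
        try simp
      exact sub_eq_zero.mp (CStarModuleOld.inner_self.mp key)
  · exact ⟨fun ⟨hid, _⟩ => two_three hid, fun heq => ⟨three_two heq, hsa⟩⟩
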